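/- Let A be an n×n non-negative matrix with spectral radius λmax, and define Â by Â_{ij} = min{A_{ij}, A_{ji}}. Then the sum of all entries of Â is at most n·λmax. -/

import Mathlib

open Matrix Polynomial

open Filter Topology

set_option maxHeartbeats 1000000
set_option synthInstance.maxHeartbeats 200000

lemma eval_charpoly' {n : ℕ} (M : Matrix (Fin n) (Fin n) ℂ) (z : ℂ) :
    M.charpoly.eval z = (Matrix.scalar (Fin n) z - M).det := by
  unfold Matrix.charpoly
  rw [← Polynomial.coe_evalRingHom, RingHom.map_det]
  congr 1
  ext i j
  by_cases h : i = j <;>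
    simp [Matrix.charmatrix_apply, h, Matrix.scalar_apply, Matrix.diagonal, Matrix.one_apply]

lemma mem_roots_of_mem_spectrum {n : ℕ} (M : Matrix (Fin n) (Fin n) ℂ) {z : ℂ}
    (hz : z ∈ spectrum ℂ M) : z ∈ M.charpoly.roots := by
  rw [Polynomial.mem_roots M.charpoly_monic.ne_zero]
  have h1 : ¬ IsUnit (algebraMap ℂ (Matrix (Fin n) (Fin n) ℂ) z - M) := hz
  rw [Matrix.isUnit_iff_isUnit_det] at h1
  have hdet : ((algebraMap ℂ (Matrix (Fin n) (Fin n) ℂ) z) - M).det = 0 := by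
    by_contra h; exact h1 (isUnit_iff_ne_zero.mpr h)
  have halg : algebraMap ℂ (Matrix (Fin n) (Fin n) ℂ) z = Matrix.scalar (Fin n) z := rfl
  rw [IsRoot, eval_charpoly', ← halg, hdet]


lemma pow_entry_nonneg {n : ℕ} {B : Matrix (Fin n) (Fin n) ℝ}
    (h0 : ∀ i j, 0 ≤ B i j) (k : ℕ) : ∀ i j, 0 ≤ (B^k) i j := by
  induction k with
  | zero => intro i j; by_cases h : i = j <;> simp [Matrix.one_apply, h]
  | succ k ih =>
    intro i j
    rw [pow_succ, Matrix.mul_apply]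
    exact Finset.sum_nonneg fun l _ => mul_nonneg (ih i l) (h0 l j)

lemma pow_entry_le {n : ℕ} {A B : Matrix (Fin n) (Fin n) ℝ}
    (h0 : ∀ i j, 0 ≤ B i j) (hBA : ∀ i j, B i j ≤ A i j) (hA0 : ∀ i j, 0 ≤ A i j) (k : ℕ) :
    ∀ i j, (B^k) i j ≤ (A^k) i j := by
  induction k with
  | zero => intro i j; simp
  | succ k ih =>
    intro i j
    rw [pow_succ, pow_succ, Matrix.mul_apply, Matrix.mul_apply]
    exact Finset.sum_le_sum fun l _ => mul_le_mul (ih i l) (hBA l j) (h0 l j)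
      (pow_entry_nonneg hA0 k i l)

lemma cs_step {n : ℕ} {C : Matrix (Fin n) (Fin n) ℝ} (hsym : Cᵀ = C) :
    (∑ i, ∑ j, C i j)^2 ≤ (n : ℝ) * ∑ i, ∑ j, (C*C) i j := by
  set w : Fin n → ℝ := fun i => ∑ j, C i j with hw
  have hcol : ∀ l, (∑ i, C i l) = w l := by
    intro l
    rw [hw]
    refine Finset.sum_congr rfl fun i _ => ?_
    calc C i l = Cᵀ l i := rfl
      _ = C l i := by rw [hsym]
  have h2 : ∑ i, ∑ j, (C*C) i j = ∑ l, w l ^ 2 := by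
    calc ∑ i, ∑ j, (C*C) i j
        = ∑ i, ∑ j, ∑ l, C i l * C l j := by simp [Matrix.mul_apply]
      _ = ∑ i, ∑ l, ∑ j, C i l * C l j :=
          Finset.sum_congr rfl fun i _ => Finset.sum_comm
      _ = ∑ l, ∑ i, ∑ j, C i l * C l j := Finset.sum_comm
      _ = ∑ l, (∑ i, C i l) * (∑ j, C l j) := by
          refine Finset.sum_congr rfl fun l _ => ?_
          rw [Finset.sum_mul_sum]
      _ = ∑ l, w l ^ 2 := by
          refine Finset.sum_congr rfl fun l _ => ?_
          rw [hcol l, sq]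
  have hcs := Finset.sum_mul_sq_le_sq_mul_sq Finset.univ (fun _ => (1:ℝ)) w
  have h1 : ∑ i, ∑ j, C i j = ∑ i, (1:ℝ) * w i := by simp [hw]
  rw [h1, h2]
  calc (∑ i, (1:ℝ) * w i)^2 ≤ (∑ _i : Fin n, (1:ℝ)^2) * ∑ i, w i ^2 := hcs
    _ = (n:ℝ) * ∑ i, w i ^2 := by simp

noncomputable def onesVec (n : ℕ) : EuclideanSpace ℂ (Fin n) :=
  (WithLp.equiv 2 _).symm (fun _ => 1)

lemma inner_onesVec {n : ℕ} (M : Matrix (Fin n) (Fin n) ℂ) :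
    inner (𝕜 := ℂ) (onesVec n) (Matrix.toEuclideanCLM (𝕜 := ℂ) M (onesVec n)) =
      ∑ i, ∑ j, M i j := by
  rw [onesVec, WithLp.equiv_symm_apply, Matrix.toEuclideanCLM_toLp]
  rw [PiLp.inner_apply]
  simp [Matrix.toLin'_apply, Matrix.mulVec, dotProduct]

lemma norm_onesVec_sq {n : ℕ} : ‖onesVec n‖ ^ 2 = (n : ℝ) := by
  rw [EuclideanSpace.norm_eq]
  rw [Real.sq_sqrt]
  · simp [onesVec]
  · positivity

lemma sum_pow_le_opNorm {n : ℕ} (A : Matrix (Fin n) (Fin n) ℝ) (hA : ∀ i j, 0 ≤ A i j) (k : ℕ) :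
    ∑ i, ∑ j, (A^k) i j ≤ n * ‖(Matrix.toEuclideanCLM (𝕜 := ℂ) (A.map Complex.ofReal))^k‖ := by
  have hmap : (A.map Complex.ofReal) ^ k = (A ^ k).map Complex.ofReal := by
    have h1 : ∀ B : Matrix (Fin n) (Fin n) ℝ, B.map Complex.ofReal =
        (Complex.ofRealHom.mapMatrix : Matrix (Fin n) (Fin n) ℝ →+* _) B := fun B => rfl
    rw [h1, h1, map_pow]
  set T := Matrix.toEuclideanCLM (𝕜 := ℂ) (A.map Complex.ofReal) with hT
  have hTk : T ^ k = Matrix.toEuclideanCLM (𝕜 := ℂ) ((A.map Complex.ofReal) ^ k) :=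
    (map_pow _ _ _).symm
  have hinner : inner (𝕜 := ℂ) (onesVec n) ((T ^ k) (onesVec n)) =
      ((∑ i, ∑ j, (A ^ k) i j : ℝ) : ℂ) := by
    rw [hTk, inner_onesVec, hmap]
    push_cast
    simp [Matrix.map_apply]
  have hnonneg : 0 ≤ ∑ i, ∑ j, (A ^ k) i j :=
    Finset.sum_nonneg fun i _ => Finset.sum_nonneg fun j _ =>
      pow_entry_nonneg hA k i j
  have h2 : ‖inner (𝕜 := ℂ) (onesVec n) ((T ^ k) (onesVec n))‖ ≤ ‖onesVec n‖ * ‖(T ^ k) (onesVec n)‖ :=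
    norm_inner_le_norm _ _
  have h3 : ‖(T ^ k) (onesVec n)‖ ≤ ‖T ^ k‖ * ‖onesVec n‖ := (T ^ k).le_opNorm _
  have h4 : ‖inner (𝕜 := ℂ) (onesVec n) ((T ^ k) (onesVec n))‖ = ∑ i, ∑ j, (A ^ k) i j := by
    rw [hinner, Complex.norm_real, Real.norm_of_nonneg hnonneg]
  calc ∑ i, ∑ j, (A ^ k) i j = ‖inner (𝕜 := ℂ) (onesVec n) ((T ^ k) (onesVec n))‖ := h4.symm
    _ ≤ ‖onesVec n‖ * (‖T ^ k‖ * ‖onesVec n‖) :=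
        h2.trans (mul_le_mul_of_nonneg_left h3 (norm_nonneg _))
    _ = ‖onesVec n‖ ^ 2 * ‖T ^ k‖ := by ring
    _ = n * ‖T ^ k‖ := by rw [norm_onesVec_sq]

theorem hatA_sum_bound (n : ℕ) (A : Matrix (Fin n) (Fin n) ℝ)
    (hA : ∀ i j, 0 ≤ A i j)
    (lmax : ℝ)
    (hl : ((lmax : ℂ)) ∈ ((A.map Complex.ofReal).charpoly).roots)
    (hlmax : ∀ z ∈ ((A.map Complex.ofReal).charpoly).roots, ‖z‖ ≤ lmax) :
    ∑ i, ∑ j, min (A i j) (A j i) ≤ n * lmax := by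
  -- n > 0
  rcases Nat.eq_zero_or_pos n with hn | hn
  · exfalso
    subst hn
    have h1 : (A.map Complex.ofReal).charpoly = 1 := by
      rw [Matrix.charpoly, Matrix.det_isEmpty]
    rw [h1, Polynomial.roots_one] at hl
    exact Multiset.notMem_zero _ hl
  have hnR : (0:ℝ) < n := by exact_mod_cast hn
  -- lmax ≥ 0
  have hlabs : |lmax| ≤ lmax := by simpa using hlmax _ hl
  have hl0 : 0 ≤ lmax := (abs_nonneg lmax).trans hlabs
  -- the symmetric minorant
  set B : Matrix (Fin n) (Fin n) ℝ := Matrix.of fun i j => min (A i j) (A j i) with hBdef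
  have hB0 : ∀ i j, 0 ≤ B i j := fun i j => le_min (hA i j) (hA j i)
  have hBA : ∀ i j, B i j ≤ A i j := fun i j => min_le_left _ _
  have hBsym : Bᵀ = B := by
    ext i j; simp [hBdef, Matrix.transpose_apply, min_comm]
  set S : ℝ := ∑ i, ∑ j, B i j with hSdef
  have hgoal_eq : (∑ i, ∑ j, min (A i j) (A j i)) = S := rfl
  set s : ℝ := S / n with hsdef
  have hS0 : 0 ≤ S := Finset.sum_nonneg fun i _ => Finset.sum_nonneg fun j _ => hB0 i j
  have hs0 : 0 ≤ s := div_nonneg hS0 hnR.le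
  -- key induction : s ^ (2^j) ≤ (∑∑ B^(2^j)) / n
  have key : ∀ j : ℕ, s ^ (2^j) ≤ (∑ i, ∑ p, (B ^ (2^j)) i p) / n := by
    intro j
    induction j with
    | zero => simp [hsdef, hSdef]
    | succ j ih =>
      have hQ0 : 0 ≤ (∑ i, ∑ p, (B ^ (2^j)) i p) / n :=
        div_nonneg (Finset.sum_nonneg fun i _ => Finset.sum_nonneg fun p _ =>
          pow_entry_nonneg hB0 _ i p) hnR.le
      have hsq : (s ^ (2^j))^2 ≤ ((∑ i, ∑ p, (B ^ (2^j)) i p) / n)^2 :=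
        pow_le_pow_left₀ (pow_nonneg hs0 _) ih 2
      have hsymP : (B ^ (2^j))ᵀ = B ^ (2^j) := by
        rw [Matrix.transpose_pow, hBsym]
      have hcs := cs_step hsymP
      have hmul : (B ^ (2^j)) * (B ^ (2^j)) = B ^ (2^(j+1)) := by
        rw [← pow_add]; ring_nf
      rw [hmul] at hcs
      calc s ^ (2^(j+1)) = (s ^ (2^j))^2 := by rw [← pow_mul]; ring_nf
        _ ≤ ((∑ i, ∑ p, (B ^ (2^j)) i p) / n)^2 := hsq
        _ = (∑ i, ∑ p, (B ^ (2^j)) i p)^2 / n^2 := by rw [div_pow]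
        _ ≤ ((n:ℝ) * ∑ i, ∑ p, (B ^ (2^(j+1))) i p) / n^2 := by
            apply div_le_div_of_nonneg_right hcs (by positivity) |>.trans_eq rfl
        _ = (∑ i, ∑ p, (B ^ (2^(j+1))) i p) / n := by
            field_simp
  -- pass to A and the operator norm
  set T := Matrix.toEuclideanCLM (𝕜 := ℂ) (A.map Complex.ofReal) with hT
  have key2 : ∀ j : ℕ, s ^ (2^j) ≤ ‖T ^ (2^j)‖ := by
    intro j
    refine (key j).trans ?_
    have h1 : (∑ i, ∑ p, (B ^ (2^j)) i p) ≤ ∑ i, ∑ p, (A ^ (2^j)) i p :=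
      Finset.sum_le_sum fun i _ => Finset.sum_le_sum fun p _ =>
        pow_entry_le hB0 hBA hA _ i p
    have h2 := sum_pow_le_opNorm A hA (2^j)
    rw [div_le_iff₀ hnR]
    calc (∑ i, ∑ p, (B ^ (2^j)) i p) ≤ ∑ i, ∑ p, (A ^ (2^j)) i p := h1
      _ ≤ n * ‖T ^ (2^j)‖ := h2
      _ = ‖T ^ (2^j)‖ * n := by ring
  -- ENNReal / Gelfand
  set s' : NNReal := ⟨s, hs0⟩ with hs'
  set L : NNReal := ⟨lmax, hl0⟩ with hL
  have hstep : ∀ j : ℕ, (s' : ENNReal) ≤ (‖T ^ (2^j)‖₊ : ENNReal) ^ (1 / ((2:ℝ)^j)) := by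
    intro j
    have h1 : (s' : ENNReal) ^ ((2:ℕ)^j) ≤ (‖T ^ (2^j)‖₊ : ENNReal) := by
      rw [← ENNReal.coe_pow, ENNReal.coe_le_coe]
      rw [← NNReal.coe_le_coe]
      push_cast
      exact (key2 j).trans_eq (by simp)
    have h2 := ENNReal.rpow_le_rpow (z := 1 / ((2:ℝ)^j)) h1 (by positivity)
    rw [← ENNReal.rpow_natCast _ ((2:ℕ)^j), ← ENNReal.rpow_mul] at h2
    have h3 : (((2:ℕ)^j : ℕ) : ℝ) * (1 / (2:ℝ)^j) = 1 := by
      push_cast; field_simp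
    rwa [h3, ENNReal.rpow_one] at h2
  haveI : Nonempty (Fin n) := ⟨⟨0, hn⟩⟩
  have hgel := spectrum.pow_nnnorm_pow_one_div_tendsto_nhds_spectralRadius T
  have hpow : Tendsto (fun j : ℕ => (2:ℕ)^j) atTop atTop :=
    tendsto_pow_atTop_atTop_of_one_lt (by norm_num)
  have hgel2 : Tendsto (fun j : ℕ => (‖T ^ ((2:ℕ)^j)‖₊ : ENNReal) ^ (1 / (((2:ℕ)^j : ℕ) : ℝ)))
      atTop (𝓝 (spectralRadius ℂ T)) := hgel.comp hpow
  have hsle : (s' : ENNReal) ≤ spectralRadius ℂ T := by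
    refine ge_of_tendsto hgel2 (Eventually.of_forall fun j => ?_)
    have := hstep j
    convert this using 3
    · rfl
    · norm_num
  have hrad : spectralRadius ℂ T ≤ (L : ENNReal) := by
    rw [spectralRadius]
    refine iSup₂_le fun z hz => ?_
    have hz' : z ∈ spectrum ℂ (A.map Complex.ofReal) := by
      rwa [hT, AlgEquiv.spectrum_eq] at hz
    have hzr := mem_roots_of_mem_spectrum _ hz'
    have := hlmax z hzr
    rw [ENNReal.coe_le_coe, ← NNReal.coe_le_coe]
    exact this
  have hfin : s ≤ lmax := by
    have := hsle.trans hrad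
    rw [ENNReal.coe_le_coe, ← NNReal.coe_le_coe] at this
    exact this
  rw [hgoal_eq]
  calc S = n * s := by rw [hsdef]; field_simp
    _ ≤ n * lmax := by
        exact mul_le_mul_of_nonneg_left hfin hnR.le
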